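/- Let R be a J-Noetherian Bezout domain which does not have stable range 1. Then R contains a nonzero nonunit adequate element. -/
import Mathlib


/-- A commutative ring is `J`-Noetherian if it satisfies the ascending chain condition
on `J`-radical ideals, i.e. ideals that equal the intersection of all maximal ideals
containing them (equivalently, ideals fixed by `Ideal.jacobson`). -/
def IsJNoetherian (R : Type*) [CommRing R] : Prop :=
  ∀ f : ℕ →o Ideal R, (∀ n, (f n).jacobson = f n) → ∃ n, ∀ m, n ≤ m → f m = f n

/-- A commutative ring has stable range 1 if whenever `aR + bR = R` there is `t` with
`a + b * t` a unit. -/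
def HasStableRangeOne (R : Type*) [CommRing R] : Prop :=
  ∀ a b : R, Ideal.span {a} + Ideal.span {b} = ⊤ → ∃ t : R, IsUnit (a + b * t)

/-- An element `a` of a commutative ring is adequate if for every `b` there exist `r, s`
with `a = r * s`, `rR + bR = R`, and `s'R + bR ≠ R` for every nonunit `s'` with
`sR ⊆ s'R`. -/
def IsAdequateElement {R : Type*} [CommRing R] (a : R) : Prop :=
  ∀ b : R, ∃ r s : R, a = r * s ∧
    Ideal.span {r} + Ideal.span {b} = ⊤ ∧
    ∀ s' : R, ¬IsUnit s' → Ideal.span {s} ≤ Ideal.span ({s'} : Set R) →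
      Ideal.span {s'} + Ideal.span {b} ≠ ⊤

/-- Under ACC on `J`-radical ideals, any nonempty family of `J`-radical ideals has a
maximal element. -/
theorem IsJNoetherian.exists_max_mem {R : Type*} [CommRing R] (hJ : IsJNoetherian R)
    (F : Set (Ideal R)) (hF : F.Nonempty) (hrad : ∀ I ∈ F, I.jacobson = I) :
    ∃ I ∈ F, ∀ J ∈ F, I ≤ J → J = I := by
  by_contra h
  push_neg at h
  choose! step hstep1 hstep2 hstep3 using h
  obtain ⟨I0, hI0⟩ := hF
  let f : ℕ → Ideal R := fun n => Nat.rec I0 (fun _ I => step I) n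
  have hmemf : ∀ n, f n ∈ F := by
    intro n
    induction n with
    | zero => exact hI0
    | succ n ih => exact hstep1 _ ih
  have hle : ∀ n, f n ≤ f (n + 1) := fun n => hstep2 _ (hmemf n)
  have hne : ∀ n, f (n + 1) ≠ f n := fun n => hstep3 _ (hmemf n)
  have hmono : Monotone f := monotone_nat_of_le_succ hle
  obtain ⟨n, hn⟩ := hJ ⟨f, hmono⟩ (fun n => hrad _ (hmemf n))
  exact hne n (hn (n + 1) (Nat.le_succ n))

theorem exists_adequate_of_jNoetherian_not_sr1 (R : Type*) [CommRing R] [IsDomain R]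
    [IsBezout R] (hJ : IsJNoetherian R) (hsr : ¬HasStableRangeOne R) :
    ∃ a : R, a ≠ 0 ∧ ¬IsUnit a ∧ IsAdequateElement a := by
  classical
  rw [HasStableRangeOne] at hsr
  push_neg at hsr
  obtain ⟨a0, b0, hab, ht⟩ := hsr
  have hna0 : ¬IsUnit a0 := by simpa using ht 0
  have ha0 : a0 ≠ 0 := by
    rintro rfl
    have hb : IsUnit b0 := by
      rw [show Ideal.span ({(0 : R)} : Set R) = ⊥ from Ideal.span_singleton_eq_bot.mpr rfl] at hab
      rw [show (⊥ + Ideal.span ({b0} : Set R)) = Ideal.span {b0} from by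
        rw [Submodule.add_eq_sup, bot_sup_eq]] at hab
      exact Ideal.span_singleton_eq_top.1 hab
    have h1 := ht 1
    simp at h1
    exact h1 hb
  set F : Set (Ideal R) :=
    {I | ∃ x : R, x ≠ 0 ∧ ¬IsUnit x ∧ I = (Ideal.span {x}).jacobson} with hFdef
  have hFne : F.Nonempty := ⟨_, a0, ha0, hna0, rfl⟩
  have hFrad : ∀ I ∈ F, I.jacobson = I := by
    rintro I ⟨x, -, -, rfl⟩
    exact Ideal.jacobson_idem
  obtain ⟨I, hIF, hmax⟩ := hJ.exists_max_mem F hFne hFrad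
  obtain ⟨a, ha, hnau, rfl⟩ := hIF
  -- a lies in a unique maximal ideal M
  have hspan_ne : Ideal.span ({a} : Set R) ≠ ⊤ := by
    simpa [Ideal.span_singleton_eq_top] using hnau
  obtain ⟨M, hM, hleM⟩ := Ideal.exists_le_maximal _ hspan_ne
  have haM : a ∈ M := hleM (Ideal.subset_span rfl)
  have huniq : ∀ N : Ideal R, N.IsMaximal → a ∈ N → N = M := by
    intro N hN haN
    by_contra hNM
    have hnotle : ¬(M ≤ N) := by
      intro hle
      exact hNM ((hM.eq_of_le hN.ne_top hle).symm)
    obtain ⟨c, hcM, hcN⟩ := SetLike.not_le_iff_exists.1 hnotle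
    obtain ⟨g, hg⟩ :=
      (IsBezout.isPrincipal_of_FG (Ideal.span {a, c})
        (Submodule.fg_span (Set.toFinite _))).principal
    have hg' : Ideal.span ({a, c} : Set R) = Ideal.span ({g} : Set R) := hg
    have hag : Ideal.span ({a} : Set R) ≤ Ideal.span ({g} : Set R) := by
      rw [← hg']
      exact Ideal.span_mono (Set.singleton_subset_iff.2 (Set.mem_insert _ _))
    have hgM : Ideal.span ({g} : Set R) ≤ M := by
      rw [← hg', Ideal.span_le]
      rintro x (rfl | rfl)
      · exact haM
      · exact hcM
    have hg0 : g ≠ 0 := by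
      rintro rfl
      have h0 : a ∈ Ideal.span ({(0 : R)} : Set R) := hag (Ideal.subset_span rfl)
      rw [Ideal.span_singleton_eq_bot.mpr rfl] at h0
      exact ha ((Submodule.mem_bot R).1 h0)
    have hgu : ¬IsUnit g := by
      intro hu
      exact hM.ne_top (top_le_iff.1 (Ideal.span_singleton_eq_top.2 hu ▸ hgM))
    have hmem : (Ideal.span ({g} : Set R)).jacobson ∈ F := ⟨g, hg0, hgu, rfl⟩
    have heq := hmax _ hmem (Ideal.jacobson_mono hag)
    have hjacN : (Ideal.span ({a} : Set R)).jacobson ≤ N := by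
      rw [Ideal.jacobson]
      exact sInf_le ⟨(Ideal.span_singleton_le_iff_mem _).2 haN, hN⟩
    have hgN : g ∈ N := hjacN (heq ▸ Ideal.le_jacobson (Ideal.subset_span rfl))
    have hcN' : c ∈ N := by
      have : Ideal.span ({g} : Set R) ≤ N := (Ideal.span_singleton_le_iff_mem _).2 hgN
      exact this (hg' ▸ Ideal.subset_span (Set.mem_insert_of_mem _ rfl))
    exact hcN hcN'
  refine ⟨a, ha, hnau, fun b => ?_⟩
  by_cases hbM : b ∈ M
  · refine ⟨1, a, (one_mul a).symm, by simp [Ideal.span_singleton_one], ?_⟩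
    intro s' hs' hle habs
    obtain ⟨N, hN, hsN⟩ := Ideal.exists_le_maximal (Ideal.span {s'})
      (by simpa [Ideal.span_singleton_eq_top] using hs')
    have haN : a ∈ N := hsN (hle (Ideal.subset_span rfl))
    have hNM : N = M := huniq N hN haN
    have hleN : Ideal.span ({s'} : Set R) + Ideal.span ({b} : Set R) ≤ N := by
      rw [Submodule.add_eq_sup]
      exact sup_le hsN ((Ideal.span_singleton_le_iff_mem _).2 (hNM ▸ hbM))
    exact hN.ne_top (top_le_iff.1 (habs ▸ hleN))
  · refine ⟨a, 1, (mul_one a).symm, ?_, ?_⟩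
    · by_contra hne
      obtain ⟨N, hN, hleN⟩ := Ideal.exists_le_maximal _ hne
      have haN : a ∈ N := hleN (by
        rw [Submodule.add_eq_sup]
        exact Submodule.mem_sup_left (Ideal.subset_span rfl))
      have hbN : b ∈ N := hleN (by
        rw [Submodule.add_eq_sup]
        exact Submodule.mem_sup_right (Ideal.subset_span rfl))
      exact hbM (huniq N hN haN ▸ hbN)
    · intro s' hs' hle _
      exact hs' (Ideal.span_singleton_eq_top.1
        (Ideal.eq_top_iff_one _ |>.2 (hle (Ideal.subset_span rfl))))
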